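/- Star-shaped graph state reduction is SBS: in the (N+1)-qubit space ℂ² ⊗ (ℂ²)^{⊗N}, let |G⟩ = ∏_{k=1}^{N} CZ_{S,k} (|+⟩ ⊗ |+⟩^{⊗N}), where |±⟩ = (|0⟩ ± |1⟩)/√2 and CZ_{S,k} = |0⟩⟨0|_S ⊗ 1 + |1⟩⟨1|_S ⊗ Z_k is the controlled-phase gate between the system qubit S and the k-th environment qubit (Z_k = σ_z acting on qubit k, identity elsewhere). Then for every n with 1 ≤ n < N, tracing out the last N−n environment qubits gives tr_{n+1,…,N} |G⟩⟨G| = ½ |0⟩⟨0| ⊗ (|+⟩⟨+|)^{⊗n} + ½ |1⟩⟨1| ⊗ (|−⟩⟨−|)^{⊗n}, which is a Spectrum Broadcast Structure since ⟨+|−⟩ = 0. -/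

import Mathlib

open scoped Kronecker Matrix ComplexOrder BigOperators
open Matrix

noncomputable section

/-- The rank-one operator `|v⟩⟨w| = v wᴴ`. -/
def ketBra {n : Type*} (v w : n → ℂ) : Matrix n n ℂ := Matrix.vecMulVec v (star w)

/-- A density matrix: positive semidefinite with unit trace. -/
def IsDensityMatrix {n : Type*} [Fintype n] (ρ : Matrix n n ℂ) : Prop :=
  ρ.PosSemidef ∧ ρ.trace = 1

/-- An orthonormal family of vectors. -/
def OrthonormalFamily {n I : Type*} [Fintype n] [DecidableEq I] (e : I → n → ℂ) : Prop :=
  ∀ i j, star (e i) ⬝ᵥ e j = (if i = j then 1 else 0)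

/-- The `N`-fold Kronecker (tensor) product of a family of matrices. -/
def tensorFamily {N : ℕ} {D : Fin N → ℕ} (M : ∀ k, Matrix (Fin (D k)) (Fin (D k)) ℂ) :
    Matrix (∀ k, Fin (D k)) (∀ k, Fin (D k)) ℂ :=
  fun a a' => ∏ k, M k (a k) (a' k)

/-- The Kronecker (tensor) product of the matrices `M k` over the factors `k ∈ K`. -/
def tensorOn {N : ℕ} {D : Fin N → ℕ} (K : Finset (Fin N))
    (M : ∀ k, Matrix (Fin (D k)) (Fin (D k)) ℂ) :
    Matrix (∀ k : K, Fin (D k.1)) (∀ k : K, Fin (D k.1)) ℂ :=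
  fun a a' => ∏ k : K, M k.1 (a k) (a' k)

/-- The partial trace of a matrix on an `N`-fold tensor product over all
tensor factors *not* in `K` (entrywise: sum over equal indices in the traced factors). -/
def reduceTo {N : ℕ} {D : Fin N → ℕ} (K : Finset (Fin N))
    (M : Matrix (∀ k, Fin (D k)) (∀ k, Fin (D k)) ℂ) :
    Matrix (∀ k : K, Fin (D k.1)) (∀ k : K, Fin (D k.1)) ℂ :=
  fun a a' => ∑ b : ∀ k : {k : Fin N // k ∉ K}, Fin (D k.1),
    M (fun k => if h : k ∈ K then a ⟨k, h⟩ else b ⟨k, h⟩)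
      (fun k => if h : k ∈ K then a' ⟨k, h⟩ else b ⟨k, h⟩)

/-- The single-party reduction: the partial trace over all tensor factors except the `k`-th. -/
def reduceSingle {N : ℕ} {D : Fin N → ℕ} (k : Fin N)
    (M : Matrix (∀ l, Fin (D l)) (∀ l, Fin (D l)) ℂ) :
    Matrix (Fin (D k)) (Fin (D k)) ℂ :=
  fun a a' => ∑ b : ∀ l : {l : Fin N // l ≠ k}, Fin (D l.1),
    M (fun l => if h : l = k then cast (congrArg (fun i => Fin (D i)) h.symm) a else b ⟨l, h⟩)
      (fun l => if h : l = k then cast (congrArg (fun i => Fin (D i)) h.symm) a' else b ⟨l, h⟩)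

/-- The basis vector `|0⟩` of a qubit. -/
def ket0 : Fin 2 → ℂ := fun i => if i = 0 then 1 else 0

/-- The basis vector `|1⟩` of a qubit. -/
def ket1 : Fin 2 → ℂ := fun i => if i = 1 then 1 else 0

/-- The Pauli `z` matrix. -/
def σz : Matrix (Fin 2) (Fin 2) ℂ := !![1, 0; 0, -1]

/-- The qubit state `|+⟩ = (|0⟩ + |1⟩)/√2`. -/
def ketPlus : Fin 2 → ℂ := fun _ => ((Real.sqrt 2 : ℝ)⁻¹ : ℂ)

/-- The qubit state `|−⟩ = (|0⟩ − |1⟩)/√2`. -/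
def ketMinus : Fin 2 → ℂ :=
  fun i => if i = 0 then ((Real.sqrt 2 : ℝ)⁻¹ : ℂ) else -((Real.sqrt 2 : ℝ)⁻¹ : ℂ)

/-- The controlled-phase gate `CZ_{S,k} = |0⟩⟨0|_S ⊗ 1 + |1⟩⟨1|_S ⊗ Z_k` between the
system qubit and the `k`-th environment qubit. -/
def CZgate (N : ℕ) (k : Fin N) :
    Matrix (Fin 2 × ((l : Fin N) → Fin 2)) (Fin 2 × ((l : Fin N) → Fin 2)) ℂ :=
  ketBra ket0 ket0 ⊗ₖ (1 : Matrix ((l : Fin N) → Fin 2) ((l : Fin N) → Fin 2) ℂ) +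
  ketBra ket1 ket1 ⊗ₖ tensorFamily (D := fun _ => 2) (fun l => if l = k then σz else 1)

/-- The star-shaped graph state `|G⟩ = ∏ₖ CZ_{S,k} (|+⟩ ⊗ |+⟩^{⊗N})`. -/
def starG (N : ℕ) : (Fin 2 × ((l : Fin N) → Fin 2)) → ℂ :=
  (((List.finRange N).map (CZgate N)).prod) *ᵥ
    (fun p => ketPlus p.1 * ∏ k, ketPlus (p.2 k))

/-- Partial trace over the last `N − n` environment qubits. -/
def traceTail {N : ℕ} (n : ℕ) (hn : n ≤ N)
    (M : Matrix (Fin 2 × ((l : Fin N) → Fin 2)) (Fin 2 × ((l : Fin N) → Fin 2)) ℂ) :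
    Matrix (Fin 2 × ((l : Fin n) → Fin 2)) (Fin 2 × ((l : Fin n) → Fin 2)) ℂ :=
  fun p q => ∑ c : Fin (N - n) → Fin 2,
    M (p.1, fun k => if h : (k : ℕ) < n then p.2 ⟨k, h⟩
        else c ⟨(k : ℕ) - n, by have := k.isLt; omega⟩)
      (q.1, fun k => if h : (k : ℕ) < n then q.2 ⟨k, h⟩
        else c ⟨(k : ℕ) - n, by have := k.isLt; omega⟩)


namespace StmtAux

/-- The diagonal phase of `CZgate N k`. -/
def phase {N : ℕ} (k : Fin N) : Fin 2 × ((l : Fin N) → Fin 2) → ℂ :=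
  fun p => if p.1 = 1 ∧ p.2 k = 1 then -1 else 1

lemma tf_eq {N : ℕ} (k : Fin N) (b b' : (l : Fin N) → Fin 2) :
    tensorFamily (D := fun _ => 2) (fun l => if l = k then σz else 1) b b' =
      if b = b' then (if b k = 1 then -1 else 1) else 0 := by
  by_cases h : b = b'
  · subst h
    simp only [if_pos rfl, tensorFamily]
    rw [Finset.prod_eq_single k]
    · simp only [if_pos rfl]
      generalize b k = a
      fin_cases a <;> simp [σz]
    · intro l _ hl
      simp [if_neg hl, Matrix.one_apply]
    · simp
  · simp only [if_neg h, tensorFamily]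
    obtain ⟨l, hl⟩ := Function.ne_iff.mp h
    apply Finset.prod_eq_zero (Finset.mem_univ l)
    by_cases hlk : l = k
    · subst hlk
      revert hl
      generalize b l = a; generalize b' l = a'
      fin_cases a <;> fin_cases a' <;> simp [σz]
    · simp [if_neg hlk, Matrix.one_apply, hl]

lemma CZ_eq_diagonal (N : ℕ) (k : Fin N) :
    CZgate N k = Matrix.diagonal (phase k) := by
  ext ⟨s, b⟩ ⟨t, b'⟩
  simp only [CZgate, Matrix.add_apply, Matrix.kroneckerMap_apply, tf_eq,
    ketBra, Matrix.vecMulVec_apply, Pi.star_apply, ket0, ket1, Matrix.one_apply,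
    Matrix.diagonal_apply, phase, Prod.mk.injEq]
  fin_cases s <;> fin_cases t <;>
    by_cases hb : b = b' <;> simp [hb]

lemma prodCZ (N : ℕ) :
    ((List.finRange N).map (CZgate N)).prod =
      Matrix.diagonal (fun p => ∏ k, phase k p) := by
  have h1 : (List.finRange N).map (CZgate N) =
      (List.finRange N).map (⇑(Matrix.diagonalRingHom _ ℂ) ∘ phase) := by
    simp [CZ_eq_diagonal, Matrix.diagonalRingHom, Function.comp]
    intro a; rfl
  rw [h1, ← List.map_map, ← map_list_prod]
  show Matrix.diagonal (((List.finRange N).map phase).prod) = _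
  have h2 : ((List.finRange N).map phase).prod = fun p => ∏ k, phase k p := by
    funext p
    rw [Pi.list_prod_apply, List.map_map, Fin.prod_univ_def]
    rfl
  rw [h2]

/-- `g s` : the pointer basis state for system outcome `s`. -/
def g : Fin 2 → Fin 2 → ℂ := fun s => if s = 0 then ketPlus else ketMinus

lemma starG_eq (N : ℕ) (p : Fin 2 × ((l : Fin N) → Fin 2)) :
    starG N p = ((Real.sqrt 2 : ℝ)⁻¹ : ℂ) * ∏ k, g p.1 (p.2 k) := by
  obtain ⟨s, b⟩ := p
  rw [starG, prodCZ, Matrix.mulVec_diagonal]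
  have key : ∀ s a : Fin 2,
      (if s = 1 ∧ a = 1 then (-1 : ℂ) else 1) * ((Real.sqrt 2 : ℝ)⁻¹ : ℂ) = g s a := by
    intro s a; fin_cases s <;> fin_cases a <;> simp [g, ketPlus, ketMinus]
  calc (∏ k, phase k (s, b)) * (ketPlus s * ∏ k, ketPlus (b k))
      = ketPlus s * ∏ k, ((if s = 1 ∧ b k = 1 then (-1 : ℂ) else 1) * ketPlus (b k)) := by
        rw [Finset.prod_mul_distrib]; simp only [phase]; ring
    _ = ((Real.sqrt 2 : ℝ)⁻¹ : ℂ) * ∏ k, g (s, b).1 ((s, b).2 k) := by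
        congr 1
        apply Finset.prod_congr rfl
        intro k _
        exact key s (b k)

lemma prod_split {N n : ℕ} (h : n ≤ N) (F : Fin N → ℂ) :
    ∏ k : Fin N, F k = (∏ k : Fin n, F (Fin.castLE h k)) *
      ∏ j : Fin (N - n), F ⟨n + (j : ℕ), by omega⟩ := by
  rw [← Fin.prod_congr' F (by omega : n + (N - n) = N), Fin.prod_univ_add]
  exact congrArg₂ (· * ·)
    (Finset.prod_congr rfl fun k _ => congrArg F (Fin.ext (by simp)))
    (Finset.prod_congr rfl fun j _ => congrArg F (Fin.ext (by simp)))

lemma merge_eval {N n : ℕ} (h : n < N) (s : Fin 2) (r : Fin n → Fin 2)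
    (c : Fin (N - n) → Fin 2) :
    (∏ k : Fin N, g s (if h' : (k : ℕ) < n then r ⟨k, h'⟩
        else c ⟨(k : ℕ) - n, by have := k.isLt; omega⟩)) =
      (∏ k : Fin n, g s (r k)) * ∏ j : Fin (N - n), g s (c j) := by
  rw [prod_split h.le]
  congr 1
  · apply Finset.prod_congr rfl
    intro k _
    rw [dif_pos (by simpa using k.isLt)]
    congr 1
  · apply Finset.prod_congr rfl
    intro j _
    rw [dif_neg (by simp)]
    congr 1
    ext
    simp

lemma hstar : star (((Real.sqrt 2 : ℝ)⁻¹ : ℂ)) = ((Real.sqrt 2 : ℝ)⁻¹ : ℂ) := by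
  rw [Complex.star_def, map_inv₀, Complex.conj_ofReal]

lemma hhalf' : ((Real.sqrt 2 : ℝ)⁻¹ : ℂ) * ((Real.sqrt 2 : ℝ)⁻¹ : ℂ) = 1 / 2 := by
  rw [← mul_inv, ← Complex.ofReal_mul, Real.mul_self_sqrt (by norm_num)]
  norm_num

lemma hhalf : ((Real.sqrt 2 : ℝ)⁻¹ : ℂ) * star ((Real.sqrt 2 : ℝ)⁻¹ : ℂ) = 1 / 2 := by
  rw [hstar, hhalf']

lemma km0 : ketMinus 0 = ((Real.sqrt 2 : ℝ)⁻¹ : ℂ) := rfl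
lemma km1 : ketMinus 1 = -((Real.sqrt 2 : ℝ)⁻¹ : ℂ) := rfl
lemma kp : ∀ a, ketPlus a = ((Real.sqrt 2 : ℝ)⁻¹ : ℂ) := fun _ => rfl

lemma gsum (s t : Fin 2) :
    ∑ a : Fin 2, g s a * star (g t a) = if s = t then 1 else 0 := by
  have h2 := hhalf'
  have g0 : g 0 = ketPlus := rfl
  have g1 : g 1 = ketMinus := rfl
  rcases (by omega : s = 0 ∨ s = 1) with rfl | rfl <;>
    rcases (by omega : t = 0 ∨ t = 1) with rfl | rfl <;>
    simp only [g0, g1, Fin.sum_univ_two, km0, km1, kp, star_neg, hstar, reduceIte,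
      if_true, if_false] <;>
    norm_num <;>
    linear_combination 2 * h2

end StmtAux

open StmtAux in
/-- Star-shaped graph state reduction is a Spectrum Broadcast Structure:
`tr_{n+1,…,N} |G⟩⟨G| = ½|0⟩⟨0| ⊗ (|+⟩⟨+|)^{⊗n} + ½|1⟩⟨1| ⊗ (|−⟩⟨−|)^{⊗n}`,
with `⟨+|−⟩ = 0`. -/
theorem stmt_18 (N n : ℕ) (h1 : 1 ≤ n) (h2 : n < N) :
    traceTail n h2.le (ketBra (starG N) (starG N)) =
      ((1 : ℂ) / 2) • (ketBra ket0 ket0 ⊗ₖ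
        ketBra (fun b : (l : Fin n) → Fin 2 => ∏ k, ketPlus (b k))
               (fun b : (l : Fin n) → Fin 2 => ∏ k, ketPlus (b k))) +
      ((1 : ℂ) / 2) • (ketBra ket1 ket1 ⊗ₖ
        ketBra (fun b : (l : Fin n) → Fin 2 => ∏ k, ketMinus (b k))
               (fun b : (l : Fin n) → Fin 2 => ∏ k, ketMinus (b k))) ∧
    star ketPlus ⬝ᵥ ketMinus = 0 := by
  constructor
  · ext ⟨s, p⟩ ⟨t, q⟩
    have hG : ∀ (s : Fin 2) (r : Fin n → Fin 2) (c : Fin (N - n) → Fin 2),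
        starG N (s, fun k => if h : (k : ℕ) < n then r ⟨k, h⟩
          else c ⟨(k : ℕ) - n, by have := k.isLt; omega⟩) =
        ((Real.sqrt 2 : ℝ)⁻¹ : ℂ) * ((∏ k, g s (r k)) * ∏ j, g s (c j)) := by
      intro s r c
      rw [starG_eq]
      exact congrArg _ (merge_eval h2 s r c)
    simp only [traceTail, ketBra, Matrix.vecMulVec_apply, Pi.star_apply]
    have step1 : ∀ c : Fin (N - n) → Fin 2,
        starG N (s, fun k => if h : (k : ℕ) < n then p ⟨k, h⟩
            else c ⟨(k : ℕ) - n, by have := k.isLt; omega⟩) *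
          star (starG N (t, fun k => if h : (k : ℕ) < n then q ⟨k, h⟩
            else c ⟨(k : ℕ) - n, by have := k.isLt; omega⟩)) =
        ((1 : ℂ) / 2) * ((∏ k, g s (p k)) * star (∏ k, g t (q k))) *
          ∏ j, (g s (c j) * star (g t (c j))) := by
      intro c
      rw [hG s p c, hG t q c, ← hhalf]
      simp only [star_mul', star_prod, Finset.prod_mul_distrib]
      ring
    rw [Finset.sum_congr rfl fun c _ => step1 c, ← Finset.mul_sum,
      ← Fintype.prod_sum (fun j (a : Fin 2) => g s a * star (g t a))]
    have step2 : (∏ _j : Fin (N - n), ∑ a : Fin 2, g s a * star (g t a)) =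
        if s = t then 1 else 0 := by
      rw [Finset.prod_congr rfl fun j _ => gsum s t, Finset.prod_const]
      by_cases hst : s = t
      · simp [hst]
      · simp [hst, zero_pow (by omega : N - n ≠ 0)]
    rw [step2]
    simp only [Matrix.add_apply, Matrix.smul_apply, Matrix.kroneckerMap_apply,
      ketBra, Matrix.vecMulVec_apply, Pi.star_apply, smul_eq_mul]
    have g0 : g 0 = ketPlus := rfl
    have g1 : g 1 = ketMinus := rfl
    have k00 : ket0 (0 : Fin 2) = 1 := rfl
    have k01 : ket0 (1 : Fin 2) = 0 := rfl
    have k10 : ket1 (0 : Fin 2) = 0 := rfl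
    have k11 : ket1 (1 : Fin 2) = 1 := rfl
    rcases (by omega : s = 0 ∨ s = 1) with rfl | rfl <;>
      rcases (by omega : t = 0 ∨ t = 1) with rfl | rfl <;>
      simp only [g0, g1, k00, k01, k10, k11, star_one, star_zero, if_true, if_false,
        reduceIte] <;>
      first | ring1 | (rw [if_neg (by decide)]; ring1)
  · simp only [dotProduct, Pi.star_apply, Fin.sum_univ_two, StmtAux.kp,
      StmtAux.km0, StmtAux.km1, StmtAux.hstar, star_neg]
    ring
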